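/- If a *-subalgebra A of Mat(n×n, ℂ) (closed under conjugate transpose) has a basis consisting of real symmetric matrices, then A is commutative. -/

import Mathlib

open Matrix


/-- A `*`-subalgebra of `Mat(n×n, ℂ)` with a basis of real symmetric matrices is
commutative. -/
theorem star_subalgebra_comm_of_symmetric_basis (n : ℕ)
    (A : StarSubalgebra ℂ (Matrix (Fin n) (Fin n) ℂ)) (ι : Type) (b : Module.Basis ι ℂ A)
    (hb : ∀ i, Matrix.transpose (b i : Matrix (Fin n) (Fin n) ℂ) =
        (b i : Matrix (Fin n) (Fin n) ℂ) ∧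
      ∀ k l, ((b i : Matrix (Fin n) (Fin n) ℂ) k l).im = 0) :
    ∀ x y : A, x * y = y * x := by
  have key : ∀ x : A, (x : Matrix (Fin n) (Fin n) ℂ)ᵀ = (x : Matrix (Fin n) (Fin n) ℂ) := by
    let f : A →ₗ[ℂ] Matrix (Fin n) (Fin n) ℂ :=
      { toFun := fun x => (x : Matrix (Fin n) (Fin n) ℂ)ᵀ
        map_add' := fun x y => by simp [Matrix.transpose_add]
        map_smul' := fun c x => by simp [Matrix.transpose_smul] }
    let g : A →ₗ[ℂ] Matrix (Fin n) (Fin n) ℂ :=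
      { toFun := fun x => (x : Matrix (Fin n) (Fin n) ℂ)
        map_add' := fun x y => rfl
        map_smul' := fun c x => rfl }
    have hfg : f = g := Module.Basis.ext b fun i => (hb i).1
    intro x
    exact congrFun (congrArg DFunLike.coe hfg) x
  intro x y
  apply Subtype.ext
  calc ((x * y : A) : Matrix (Fin n) (Fin n) ℂ)
      = ((x * y : A) : Matrix (Fin n) (Fin n) ℂ)ᵀ := (key _).symm
    _ = ((x : Matrix (Fin n) (Fin n) ℂ) * (y : Matrix (Fin n) (Fin n) ℂ))ᵀ := rfl
    _ = (y : Matrix (Fin n) (Fin n) ℂ)ᵀ * (x : Matrix (Fin n) (Fin n) ℂ)ᵀ := Matrix.transpose_mul _ _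
    _ = (y : Matrix (Fin n) (Fin n) ℂ) * (x : Matrix (Fin n) (Fin n) ℂ) := by rw [key, key]
    _ = ((y * x : A) : Matrix (Fin n) (Fin n) ℂ) := rfl
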